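/- arXiv:0808.1742 — 2 statements merged into one kernel-verified Lean document; each statement's English description precedes it below -/
import Mathlib

section
/- Approximation Lemma: Let 0 < σ < 1 and C₀ ≥ 1. There exist constants B₀ ≥ 2, c > 0 and C > 0 (depending only on σ and C₀) with the following property. Let B ≥ B₀ and 0 < T ≤ c B² log B. Suppose g : [0,T] → ℓ¹(ℤ²; ℂ) is continuously differentiable, g(0) has finite support, and there is a continuous map ℰ : [0,T] → ℓ¹(ℤ²; ℂ) such that −i g′(t) = 𝒩(t)(g(t), g(t), g(t)) + ℰ(t) for all t ∈ [0,T], with ‖g(t)‖_{ℓ¹(ℤ²)} ≤ C₀ B^{−1} and ‖∫₀ᵗ ℰ(s) ds‖_{ℓ¹(ℤ²)} ≤ C₀ B^{−1−σ} for all t ∈ [0,T]. Suppose a : [0,T] → ℓ¹(ℤ²; ℂ) is a continuously differentiable solution of −i a′(t) = 𝒩(t)(a(t), a(t), a(t)) with a(0) = g(0). Then ‖a(t) − g(t)‖_{ℓ¹(ℤ²)} ≤ C B^{−1−σ/2} for all t ∈ [0,T]. -/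
set_option maxHeartbeats 1600000


open scoped BigOperators ENNReal

noncomputable section

/-- The squared Euclidean length of a lattice point `n ∈ ℤ²`. -/
def nsq (n : ℤ × ℤ) : ℤ := n.1 ^ 2 + n.2 ^ 2

/-- The set `Γ(n)` of non-self interactions at frequency `n`. -/
def Gam (n : ℤ × ℤ) : Set ((ℤ × ℤ) × (ℤ × ℤ) × (ℤ × ℤ)) :=
  {p | p.1 - p.2.1 + p.2.2 = n ∧ p.1 ≠ n ∧ p.2.2 ≠ n}

/-- `ω₄ = |n₁|² − |n₂|² + |n₃|² − |n|²`. -/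
def omega4 (n : ℤ × ℤ) (p : (ℤ × ℤ) × (ℤ × ℤ) × (ℤ × ℤ)) : ℤ :=
  nsq p.1 - nsq p.2.1 + nsq p.2.2 - nsq n

/-- The summand `a_{n₁} conj(b_{n₂}) c_{n₃} e^{iω₄ t}`. -/
def Nterm (t : ℝ) (a b c : (ℤ × ℤ) → ℂ) (n : ℤ × ℤ)
    (p : (ℤ × ℤ) × (ℤ × ℤ) × (ℤ × ℤ)) : ℂ :=
  a p.1 * (starRingEnd ℂ) (b p.2.1) * c p.2.2 *
    Complex.exp (Complex.I * (omega4 n p : ℂ) * (t : ℂ))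

/-- The trilinear operator `𝒩(t)(a,b,c)_n`. -/
def Nop (t : ℝ) (a b c : (ℤ × ℤ) → ℂ) (n : ℤ × ℤ) : ℂ :=
  -(a n * (starRingEnd ℂ) (b n) * c n) + ∑' p : Gam n, Nterm t a b c n ↑p

abbrev P3 := (ℤ × ℤ) × (ℤ × ℤ) × (ℤ × ℤ)

def plane (n : ℤ × ℤ) : Set P3 := {p | p.1 - p.2.1 + p.2.2 = n}

def wgt (a b c : (ℤ × ℤ) → ℂ) (p : P3) : ℝ := ‖a p.1‖ * ‖b p.2.1‖ * ‖c p.2.2‖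

lemma Gam_subset_plane (n : ℤ × ℤ) : Gam n ⊆ plane n := fun p hp => hp.1

lemma norm_Nterm (t : ℝ) (a b c : (ℤ × ℤ) → ℂ) (n : ℤ × ℤ) (p : P3) :
    ‖Nterm t a b c n p‖ = wgt a b c p := by
  unfold Nterm wgt
  rw [norm_mul, norm_mul, norm_mul]
  have h1 : ‖Complex.exp (Complex.I * ((omega4 n p : ℤ) : ℂ) * ((t : ℝ) : ℂ))‖ = 1 := by
    rw [Complex.norm_exp]
    simp [Complex.mul_re]
  rw [h1, RCLike.norm_conj]
  ring

lemma summable_wgt {a b c : (ℤ × ℤ) → ℂ} (ha : Summable fun n => ‖a n‖)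
    (hb : Summable fun n => ‖b n‖) (hc : Summable fun n => ‖c n‖) :
    Summable (wgt a b c) := by
  have hbc := hb.mul_of_nonneg hc (fun _ => norm_nonneg _) (fun _ => norm_nonneg _)
  have h2 := ha.mul_of_nonneg hbc (fun _ => norm_nonneg _)
    (fun q => mul_nonneg (norm_nonneg _) (norm_nonneg _))
  unfold wgt
  simpa [mul_assoc] using h2

lemma tsum_wgt {a b c : (ℤ × ℤ) → ℂ} (ha : Summable fun n => ‖a n‖)
    (hb : Summable fun n => ‖b n‖) (hc : Summable fun n => ‖c n‖) :
    ∑' p : P3, wgt a b c p = (∑' n, ‖a n‖) * (∑' n, ‖b n‖) * (∑' n, ‖c n‖) := by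
  have hbc := hb.mul_of_nonneg hc (fun _ => norm_nonneg _) (fun _ => norm_nonneg _)
  have h2 := ha.mul_of_nonneg hbc (fun _ => norm_nonneg _)
    (fun q => mul_nonneg (norm_nonneg _) (norm_nonneg _))
  have e0 : ∑' p : P3, wgt a b c p
      = ∑' p : P3, ‖a p.1‖ * (‖b p.2.1‖ * ‖c p.2.2‖) :=
    tsum_congr fun p => by unfold wgt; ring
  have e1 := Summable.tsum_mul_tsum ha hbc h2
  have e2 := Summable.tsum_mul_tsum hb hc (hb.mul_of_nonneg hc
    (fun _ => norm_nonneg _) (fun _ => norm_nonneg _))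
  rw [e0, ← e1, ← e2, mul_assoc]

def planeEquiv : (Σ n : ℤ × ℤ, plane n) ≃ P3 where
  toFun x := x.2
  invFun p := ⟨p.1 - p.2.1 + p.2.2, ⟨p, rfl⟩⟩
  left_inv := by rintro ⟨n, p, hp⟩; obtain rfl : p.1 - p.2.1 + p.2.2 = n := hp; rfl
  right_inv p := rfl

def Sfn (a b c : (ℤ × ℤ) → ℂ) (n : ℤ × ℤ) : ℝ := ∑' p : plane n, wgt a b c ↑p

variable {a b c : (ℤ × ℤ) → ℂ}

lemma summable_sigma_wgt (hw : Summable (wgt a b c)) :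
    Summable (fun x : Σ n : ℤ × ℤ, plane n => wgt a b c x.2) :=
  (planeEquiv.summable_iff (f := wgt a b c)).2 hw

lemma summable_Sfn (hw : Summable (wgt a b c)) : Summable (Sfn a b c) :=
  Summable.sigma' (summable_sigma_wgt hw) (fun n => hw.subtype _)

lemma tsum_Sfn (hw : Summable (wgt a b c)) :
    ∑' n, Sfn a b c n = ∑' p : P3, wgt a b c p := by
  have h1 : ∑' x : (n : ℤ × ℤ) × plane n, wgt a b c ↑x.2 = ∑' p : P3, wgt a b c p :=
    planeEquiv.tsum_eq (f := wgt a b c)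
  have h2 : ∑' x : (n : ℤ × ℤ) × plane n, wgt a b c ↑x.2
      = ∑' n, ∑' p : plane n, wgt a b c ↑p :=
    Summable.tsum_sigma' (fun n => hw.subtype _) (summable_sigma_wgt hw)
  exact h2.symm.trans h1

lemma summable_wgt_Gam (hw : Summable (wgt a b c)) (n : ℤ × ℤ) :
    Summable (fun p : Gam n => wgt a b c ↑p) := hw.subtype _

lemma summable_Nterm_Gam (t : ℝ) (hw : Summable (wgt a b c)) (n : ℤ × ℤ) :
    Summable (fun p : Gam n => Nterm t a b c n ↑p) := by
  apply Summable.of_norm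
  have : (fun p : Gam n => ‖Nterm t a b c n ↑p‖) = fun p : Gam n => wgt a b c ↑p := by
    funext p; exact norm_Nterm t a b c n ↑p
  rw [this]; exact hw.subtype _

lemma norm_tsum_Gam_le (t : ℝ) (hw : Summable (wgt a b c)) (n : ℤ × ℤ) :
    ‖∑' p : Gam n, Nterm t a b c n ↑p‖ ≤ Sfn a b c n := by
  calc ‖∑' p : Gam n, Nterm t a b c n ↑p‖ ≤ ∑' p : Gam n, ‖Nterm t a b c n ↑p‖ :=
        norm_tsum_le_tsum_norm (by
          have : (fun p : Gam n => ‖Nterm t a b c n ↑p‖) = fun p : Gam n => wgt a b c ↑p := by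
            funext p; exact norm_Nterm t a b c n ↑p
          rw [this]; exact hw.subtype _)
    _ = ∑' p : Gam n, wgt a b c ↑p := tsum_congr fun p => norm_Nterm t a b c n ↑p
    _ ≤ Sfn a b c n := by
        refine Summable.tsum_le_tsum_of_inj (Set.inclusion (Gam_subset_plane n))
          (Set.inclusion_injective (Gam_subset_plane n))
          (fun q _ => mul_nonneg (mul_nonneg (norm_nonneg _) (norm_nonneg _)) (norm_nonneg _))
          (fun p => le_of_eq rfl) (hw.subtype _) (hw.subtype _)

lemma norm_Nop_le (t : ℝ) (hw : Summable (wgt a b c)) (n : ℤ × ℤ) :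
    ‖Nop t a b c n‖ ≤ ‖a n‖ * ‖b n‖ * ‖c n‖ + Sfn a b c n := by
  unfold Nop
  refine (norm_add_le _ _).trans (add_le_add ?_ (norm_tsum_Gam_le t hw n))
  rw [norm_neg, norm_mul, norm_mul, RCLike.norm_conj]

lemma summable_diag (ha : Summable fun n => ‖a n‖)
    (hb : Summable fun n => ‖b n‖) (hc : Summable fun n => ‖c n‖) :
    Summable fun n => ‖a n‖ * ‖b n‖ * ‖c n‖ := by
  refine Summable.of_nonneg_of_le
    (fun n => mul_nonneg (mul_nonneg (norm_nonneg _) (norm_nonneg _)) (norm_nonneg _))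
    (fun n => ?_) (ha.mul_right ((∑' m, ‖b m‖) * (∑' m, ‖c m‖)))
  have h1 : ‖b n‖ ≤ ∑' m, ‖b m‖ := Summable.le_tsum hb n fun _ _ => norm_nonneg _
  have h2 : ‖c n‖ ≤ ∑' m, ‖c m‖ := Summable.le_tsum hc n fun _ _ => norm_nonneg _
  calc ‖a n‖ * ‖b n‖ * ‖c n‖ = ‖a n‖ * (‖b n‖ * ‖c n‖) := by ring
    _ ≤ ‖a n‖ * ((∑' m, ‖b m‖) * (∑' m, ‖c m‖)) :=
        mul_le_mul_of_nonneg_left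
          (mul_le_mul h1 h2 (norm_nonneg _) ((norm_nonneg _).trans h1)) (norm_nonneg _)

lemma tsum_diag_le (ha : Summable fun n => ‖a n‖)
    (hb : Summable fun n => ‖b n‖) (hc : Summable fun n => ‖c n‖) :
    ∑' n, ‖a n‖ * ‖b n‖ * ‖c n‖ ≤ (∑' n, ‖a n‖) * (∑' n, ‖b n‖) * (∑' n, ‖c n‖) := by
  have step : ∀ n, ‖a n‖ * ‖b n‖ * ‖c n‖ ≤ ‖a n‖ * ((∑' m, ‖b m‖) * (∑' m, ‖c m‖)) := by
    intro n
    have h1 : ‖b n‖ ≤ ∑' m, ‖b m‖ := Summable.le_tsum hb n fun _ _ => norm_nonneg _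
    have h2 : ‖c n‖ ≤ ∑' m, ‖c m‖ := Summable.le_tsum hc n fun _ _ => norm_nonneg _
    calc ‖a n‖ * ‖b n‖ * ‖c n‖ = ‖a n‖ * (‖b n‖ * ‖c n‖) := by ring
      _ ≤ ‖a n‖ * ((∑' m, ‖b m‖) * (∑' m, ‖c m‖)) :=
          mul_le_mul_of_nonneg_left
            (mul_le_mul h1 h2 (norm_nonneg _) ((norm_nonneg _).trans h1)) (norm_nonneg _)
  calc ∑' n, ‖a n‖ * ‖b n‖ * ‖c n‖
      ≤ ∑' n, ‖a n‖ * ((∑' m, ‖b m‖) * (∑' m, ‖c m‖)) :=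
        Summable.tsum_le_tsum step (summable_diag ha hb hc) (ha.mul_right _)
    _ = (∑' n, ‖a n‖) * (∑' n, ‖b n‖) * (∑' n, ‖c n‖) := by rw [tsum_mul_right]; ring


lemma summable_norm_sub {x y : (ℤ × ℤ) → ℂ} (hx : Summable fun n => ‖x n‖)
    (hy : Summable fun n => ‖y n‖) : Summable fun n => ‖(x - y) n‖ :=
  Summable.of_nonneg_of_le (fun n => norm_nonneg _)
    (fun n => norm_sub_le (x n) (y n)) (hx.add hy)

lemma Nop_sub (t : ℝ) {x y : (ℤ × ℤ) → ℂ} (hx : Summable fun n => ‖x n‖)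
    (hy : Summable fun n => ‖y n‖) (n : ℤ × ℤ) :
    Nop t x x x n - Nop t y y y n =
      Nop t (x - y) x x n + Nop t y (x - y) x n + Nop t y y (x - y) n := by
  have hd := summable_norm_sub hx hy
  have hterm : ∀ p : Gam n, Nterm t x x x n ↑p - Nterm t y y y n ↑p =
      Nterm t (x - y) x x n ↑p + Nterm t y (x - y) x n ↑p + Nterm t y y (x - y) n ↑p := by
    intro p
    unfold Nterm
    simp only [Pi.sub_apply, map_sub]
    ring
  have s1 := summable_Nterm_Gam t (summable_wgt hd hx hx) n
  have s2 := summable_Nterm_Gam t (summable_wgt hy hd hx) n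
  have s3 := summable_Nterm_Gam t (summable_wgt hy hy hd) n
  have sx := summable_Nterm_Gam t (summable_wgt hx hx hx) n
  have sy := summable_Nterm_Gam t (summable_wgt hy hy hy) n
  have htsum : (∑' p : Gam n, Nterm t x x x n ↑p) - (∑' p : Gam n, Nterm t y y y n ↑p)
      = (∑' p : Gam n, Nterm t (x - y) x x n ↑p) + (∑' p : Gam n, Nterm t y (x - y) x n ↑p)
        + (∑' p : Gam n, Nterm t y y (x - y) n ↑p) := by
    rw [← Summable.tsum_sub sx sy, ← Summable.tsum_add s1 s2, ← Summable.tsum_add (s1.add s2) s3]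
    exact tsum_congr fun p => hterm p
  unfold Nop
  simp only [Pi.sub_apply, map_sub]
  linear_combination htsum

abbrev L1 := lp (fun _ : ℤ × ℤ => ℂ) 1

lemma lp1_summable (f : L1) : Summable fun n => ‖f n‖ := by
  have := (lp.memℓp f).summable (p := 1) (by simp)
  simpa using this

lemma lp1_norm (f : L1) : ‖f‖ = ∑' n, ‖f n‖ := by
  rw [lp.norm_eq_tsum_rpow (by simp) f]
  simp

lemma lp1_norm_le (f : L1) {u : (ℤ × ℤ) → ℝ} (hu : Summable u)
    (h : ∀ n, ‖f n‖ ≤ u n) : ‖f‖ ≤ ∑' n, u n := by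
  rw [lp1_norm]; exact Summable.tsum_le_tsum h (lp1_summable f) hu

lemma nop_lip (t : ℝ) (x y F : L1)
    (hF : ∀ n, F n = Complex.I * (Nop t ⇑x ⇑x ⇑x n - Nop t ⇑y ⇑y ⇑y n)) :
    ‖F‖ ≤ 2 * (‖x‖ * ‖x‖ + ‖y‖ * ‖x‖ + ‖y‖ * ‖y‖) * ‖x - y‖ := by
  have hx := lp1_summable x
  have hy := lp1_summable y
  have hcoe : (⇑x - ⇑y : (ℤ × ℤ) → ℂ) = ⇑(x - y) := (lp.coeFn_sub x y).symm
  have hd : Summable fun n => ‖(⇑x - ⇑y : (ℤ × ℤ) → ℂ) n‖ := summable_norm_sub hx hy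
  have hw1 := summable_wgt hd hx hx
  have hw2 := summable_wgt hy hd hx
  have hw3 := summable_wgt hy hy hd
  set u : (ℤ × ℤ) → ℝ := fun n =>
    (‖(⇑x - ⇑y : (ℤ × ℤ) → ℂ) n‖ * ‖x n‖ * ‖x n‖ + Sfn (⇑x - ⇑y) ⇑x ⇑x n)
    + (‖y n‖ * ‖(⇑x - ⇑y : (ℤ × ℤ) → ℂ) n‖ * ‖x n‖ + Sfn ⇑y (⇑x - ⇑y) ⇑x n)
    + (‖y n‖ * ‖y n‖ * ‖(⇑x - ⇑y : (ℤ × ℤ) → ℂ) n‖ + Sfn ⇑y ⇑y (⇑x - ⇑y) n) with hu_def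
  have su1 := (summable_diag hd hx hx).add (summable_Sfn hw1)
  have su2 := (summable_diag hy hd hx).add (summable_Sfn hw2)
  have su3 := (summable_diag hy hy hd).add (summable_Sfn hw3)
  have hsum_u : Summable u := (su1.add su2).add su3
  have hpt : ∀ n, ‖F n‖ ≤ u n := by
    intro n
    have e1 : ‖F n‖ = ‖Nop t ⇑x ⇑x ⇑x n - Nop t ⇑y ⇑y ⇑y n‖ := by
      rw [hF n, norm_mul, Complex.norm_I, one_mul]
    rw [e1, Nop_sub t hx hy n]
    refine (norm_add₃_le).trans ?_
    exact add_le_add (add_le_add (norm_Nop_le t hw1 n) (norm_Nop_le t hw2 n))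
      (norm_Nop_le t hw3 n)
  have hF_le : ‖F‖ ≤ ∑' n, u n := lp1_norm_le F hsum_u hpt
  have hD : ∑' n, ‖(⇑x - ⇑y : (ℤ × ℤ) → ℂ) n‖ = ‖x - y‖ := by
    rw [lp1_norm (x - y)]
    exact tsum_congr fun n => by rw [hcoe]
  have hX : ∑' n, ‖x n‖ = ‖x‖ := (lp1_norm x).symm
  have hY : ∑' n, ‖y n‖ = ‖y‖ := (lp1_norm y).symm
  have split : ∑' n, u n =
      ((∑' n, ‖(⇑x - ⇑y : (ℤ × ℤ) → ℂ) n‖ * ‖x n‖ * ‖x n‖) + ∑' n, Sfn (⇑x - ⇑y) ⇑x ⇑x n)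
      + ((∑' n, ‖y n‖ * ‖(⇑x - ⇑y : (ℤ × ℤ) → ℂ) n‖ * ‖x n‖) + ∑' n, Sfn ⇑y (⇑x - ⇑y) ⇑x n)
      + ((∑' n, ‖y n‖ * ‖y n‖ * ‖(⇑x - ⇑y : (ℤ × ℤ) → ℂ) n‖) + ∑' n, Sfn ⇑y ⇑y (⇑x - ⇑y) n) := by
    rw [hu_def, Summable.tsum_add (su1.add su2) su3, Summable.tsum_add su1 su2,
      Summable.tsum_add (summable_diag hd hx hx) (summable_Sfn hw1),
      Summable.tsum_add (summable_diag hy hd hx) (summable_Sfn hw2),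
      Summable.tsum_add (summable_diag hy hy hd) (summable_Sfn hw3)]
  have b1 := tsum_diag_le hd hx hx
  have b2 := tsum_diag_le hy hd hx
  have b3 := tsum_diag_le hy hy hd
  have c1 : ∑' n, Sfn (⇑x - ⇑y) ⇑x ⇑x n =
      (∑' n, ‖(⇑x - ⇑y : (ℤ × ℤ) → ℂ) n‖) * (∑' n, ‖x n‖) * (∑' n, ‖x n‖) := by
    rw [tsum_Sfn hw1, tsum_wgt hd hx hx]
  have c2 : ∑' n, Sfn ⇑y (⇑x - ⇑y) ⇑x n =
      (∑' n, ‖y n‖) * (∑' n, ‖(⇑x - ⇑y : (ℤ × ℤ) → ℂ) n‖) * (∑' n, ‖x n‖) := by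
    rw [tsum_Sfn hw2, tsum_wgt hy hd hx]
  have c3 : ∑' n, Sfn ⇑y ⇑y (⇑x - ⇑y) n =
      (∑' n, ‖y n‖) * (∑' n, ‖y n‖) * (∑' n, ‖(⇑x - ⇑y : (ℤ × ℤ) → ℂ) n‖) := by
    rw [tsum_Sfn hw3, tsum_wgt hy hy hd]
  refine hF_le.trans ?_
  simp only [hD, hX, hY] at b1 b2 b3 c1 c2 c3
  rw [split, c1, c2, c3]
  nlinarith [b1, b2, b3]

open Set intervalIntegral MeasureTheory Filter Topology

/-- Approximation Lemma: a solution `g` of `FNLS` with error term `ℰ` obeying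
`‖g(t)‖_{ℓ¹} ≲ B⁻¹` and `‖∫₀ᵗ ℰ‖_{ℓ¹} ≲ B^{−1−σ}` stays `B^{−1−σ/2}`-close in `ℓ¹`
to the genuine `FNLS` evolution of the same initial data, for times `T ≲ B² log B`. -/
theorem stmt5 (σ C₀ : ℝ) (hσ0 : 0 < σ) (hσ1 : σ < 1) (hC₀ : 1 ≤ C₀) :
    ∃ B₀ c C : ℝ, 2 ≤ B₀ ∧ 0 < c ∧ 0 < C ∧
      ∀ B : ℝ, B₀ ≤ B → ∀ T : ℝ, 0 < T → T ≤ c * B ^ 2 * Real.log B →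
      ∀ g g' E : ℝ → lp (fun _ : ℤ × ℤ => ℂ) 1,
        (Function.support (⇑(g 0))).Finite →
        ContinuousOn g' (Set.Icc 0 T) →
        ContinuousOn E (Set.Icc 0 T) →
        (∀ t ∈ Set.Icc (0:ℝ) T, HasDerivWithinAt g (g' t) (Set.Icc 0 T) t) →
        (∀ t ∈ Set.Icc (0:ℝ) T, ∀ n : ℤ × ℤ,
          -Complex.I * (g' t) n = Nop t (⇑(g t)) (⇑(g t)) (⇑(g t)) n + (E t) n) →
        (∀ t ∈ Set.Icc (0:ℝ) T, ‖g t‖ ≤ C₀ * B ^ (-1 : ℝ)) →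
        (∀ t ∈ Set.Icc (0:ℝ) T, ‖∫ s in (0:ℝ)..t, E s‖ ≤ C₀ * B ^ (-1 - σ)) →
      ∀ a a' : ℝ → lp (fun _ : ℤ × ℤ => ℂ) 1,
        a 0 = g 0 →
        ContinuousOn a' (Set.Icc 0 T) →
        (∀ t ∈ Set.Icc (0:ℝ) T, HasDerivWithinAt a (a' t) (Set.Icc 0 T) t) →
        (∀ t ∈ Set.Icc (0:ℝ) T, ∀ n : ℤ × ℤ,
          -Complex.I * (a' t) n = Nop t (⇑(a t)) (⇑(a t)) (⇑(a t)) n) →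
        ∀ t ∈ Set.Icc (0:ℝ) T, ‖a t - g t‖ ≤ C * B ^ (-1 - σ / 2) := by
  have hC0 : (0:ℝ) < C₀ := lt_of_lt_of_le one_pos hC₀
  refine ⟨2 + (8*C₀) ^ (2/σ : ℝ), σ / (12 * (C₀+1)^2), 2*C₀, ?_, by positivity, by positivity, ?_⟩
  · have := Real.rpow_nonneg (by positivity : (0:ℝ) ≤ 8*C₀) (2/σ); linarith
  intro B hB T hT0 hTle g g' E hginit hg'c hEc hgderiv hgeq hgbd hEbd a a' ha0 ha'c haderiv haeq
  have hrn : (0:ℝ) ≤ (8*C₀) ^ (2/σ : ℝ) := Real.rpow_nonneg (by positivity) _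
  have hB2 : (2:ℝ) ≤ B := by linarith
  have hB0 : (0:ℝ) < B := by linarith
  have hB1 : (1:ℝ) ≤ B := by linarith
  have hBn1 : (0:ℝ) < B ^ (-1:ℝ) := Real.rpow_pos_of_pos hB0 _
  have hBσ : 8 * C₀ ≤ B ^ (σ/2 : ℝ) := by
    have h1 : (8*C₀) ^ (2/σ : ℝ) ≤ B := by linarith
    calc 8*C₀ = ((8*C₀) ^ (2/σ : ℝ)) ^ (σ/2 : ℝ) := by
          rw [← Real.rpow_mul (by positivity : (0:ℝ) ≤ 8*C₀),
            show (2/σ) * (σ/2) = 1 by field_simp, Real.rpow_one]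
      _ ≤ B ^ (σ/2 : ℝ) := Real.rpow_le_rpow hrn h1 (by positivity)
  set Q : ℝ := (1/2) * B ^ (-1 : ℝ) with hQdef
  set M1 : ℝ := (C₀ + 1) * B ^ (-1 : ℝ) with hM1def
  set K : ℝ := 6 * M1 ^ 2 with hKdef
  set ε : ℝ := K * (C₀ * B ^ (-1 - σ)) with hεdef
  have hM1pos : 0 < M1 := by rw [hM1def]; positivity
  have hKpos : 0 < K := by rw [hKdef]; positivity
  have hBσ2 : (0:ℝ) < B ^ (-1 - σ) := Real.rpow_pos_of_pos hB0 _
  have hεpos : 0 < ε := by rw [hεdef]; positivity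
  -- continuity of a, g
  have hgc : ContinuousOn g (Icc 0 T) := fun t ht => (hgderiv t ht).continuousWithinAt
  have hac : ContinuousOn a (Icc 0 T) := fun t ht => (haderiv t ht).continuousWithinAt
  -- the primitive of E
  set EI : ℝ → L1 := fun t => ∫ s in (0:ℝ)..t, E s with hEIdef
  have hEIc : ContinuousOn EI (Icc 0 T) := by
    have h0 : IntegrableOn E (Icc 0 T) MeasureTheory.volume := hEc.integrableOn_Icc
    have := continuousOn_primitive_interval (a := 0) (b := T) (μ := MeasureTheory.volume)
      (by rwa [Set.uIcc_of_le hT0.le])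
    rwa [Set.uIcc_of_le hT0.le] at this
  have hEIderiv : ∀ x ∈ Ico (0:ℝ) T, HasDerivWithinAt EI (E x) (Ici x) x := by
    intro x hx
    have hxI : x ∈ Icc (0:ℝ) T := ⟨hx.1, hx.2.le⟩
    have hmem : Icc (0:ℝ) T ∈ nhdsWithin x (Ici x) := Icc_mem_nhdsGE_of_mem hx
    have hint : IntervalIntegrable E MeasureTheory.volume 0 x :=
      (hEc.mono (by rw [Set.uIcc_of_le hx.1]; exact Set.Icc_subset_Icc le_rfl hx.2.le)).intervalIntegrable
    have hmem' : Icc (0:ℝ) T ∈ nhdsWithin x (Ioi x) :=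
      nhdsWithin_mono x Set.Ioi_subset_Ici_self hmem
    exact intervalIntegral.integral_hasDerivWithinAt_right hint
      ⟨Icc 0 T, hmem', hEc.aestronglyMeasurable measurableSet_Icc⟩
      ((hEc x hxI).mono_of_mem_nhdsWithin hmem')
  -- the auxiliary function h
  set h : ℝ → L1 := fun t => a t - g t + Complex.I • EI t with hhdef
  set h' : ℝ → L1 := fun t => a' t - g' t + Complex.I • E t with hh'def
  have hhc : ContinuousOn h (Icc 0 T) := (hac.sub hgc).add (hEIc.const_smul Complex.I)
  have hhderiv : ∀ x ∈ Ico (0:ℝ) T, HasDerivWithinAt h (h' x) (Ici x) x := by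
    intro x hx
    have hxI : x ∈ Icc (0:ℝ) T := ⟨hx.1, hx.2.le⟩
    have hmem : Icc (0:ℝ) T ∈ nhdsWithin x (Ici x) := Icc_mem_nhdsGE_of_mem hx
    exact (((haderiv x hxI).sub (hgderiv x hxI)).mono_of_mem_nhdsWithin hmem).add
      ((hEIderiv x hx).const_smul Complex.I)
  have hh0 : ‖h 0‖ = 0 := by
    rw [hhdef]
    simp [hEIdef, intervalIntegral.integral_same, ha0]
  have hEIbd : ∀ x ∈ Icc (0:ℝ) T, ‖EI x‖ ≤ C₀ * B ^ (-1 - σ) := fun x hx => hEbd x hx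
  have hsub1 : ∀ x, ‖a x - g x‖ ≤ ‖h x‖ + ‖EI x‖ := by
    intro x
    have e : a x - g x = h x - Complex.I • EI x := (add_sub_cancel_right _ _).symm
    rw [e]
    refine (norm_sub_le _ _).trans ?_
    rw [norm_smul, Complex.norm_I, one_mul]
  have hsub2 : ∀ x, ‖h x‖ ≤ ‖a x - g x‖ + ‖EI x‖ := by
    intro x
    refine (norm_add_le _ _).trans ?_
    rw [norm_smul, Complex.norm_I, one_mul]
  -- pointwise derivative formula
  have hptf : ∀ x ∈ Icc (0:ℝ) T, ∀ n : ℤ × ℤ, (h' x) n =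
      Complex.I * (Nop x (⇑(a x)) (⇑(a x)) (⇑(a x)) n - Nop x (⇑(g x)) (⇑(g x)) (⇑(g x)) n) := by
    intro x hx n
    have e : (h' x) n = (a' x) n - (g' x) n + Complex.I * (E x) n := by
      rw [hh'def]
      simp
      rfl
    have ea := haeq x hx n
    have eg := hgeq x hx n
    have ia : (a' x) n = Complex.I * Nop x (⇑(a x)) (⇑(a x)) (⇑(a x)) n := by
      rw [← ea, ← mul_assoc]
      simp [Complex.I_mul_I]
    have ig : (g' x) n = Complex.I * (Nop x (⇑(g x)) (⇑(g x)) (⇑(g x)) n + (E x) n) := by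
      rw [← eg, ← mul_assoc]
      simp [Complex.I_mul_I]
    rw [e, ia, ig]
    ring
  -- bound on ‖h'‖
  have hKbd : ∀ x ∈ Icc (0:ℝ) T, ‖a x‖ ≤ M1 → ‖h' x‖ ≤ K * ‖h x‖ + ε := by
    intro x hx hax
    have h1 : ‖h' x‖ ≤ 2 * (‖a x‖ * ‖a x‖ + ‖g x‖ * ‖a x‖ + ‖g x‖ * ‖g x‖) * ‖a x - g x‖ :=
      nop_lip x (a x) (g x) (h' x) (hptf x hx)
    have hgx : ‖g x‖ ≤ M1 := (hgbd x hx).trans (by rw [hM1def]; nlinarith)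
    have h2 : 2 * (‖a x‖ * ‖a x‖ + ‖g x‖ * ‖a x‖ + ‖g x‖ * ‖g x‖) ≤ K := by
      rw [hKdef]
      nlinarith [norm_nonneg (a x), norm_nonneg (g x)]
    have h3 : ‖a x - g x‖ ≤ ‖h x‖ + C₀ * B ^ (-1 - σ) :=
      (hsub1 x).trans (add_le_add_right (hEIbd x hx) _)
    calc ‖h' x‖ ≤ K * ‖a x - g x‖ :=
          h1.trans (mul_le_mul_of_nonneg_right h2 (norm_nonneg _))
      _ ≤ K * (‖h x‖ + C₀ * B ^ (-1 - σ)) := mul_le_mul_of_nonneg_left h3 hKpos.le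
      _ = K * ‖h x‖ + ε := by rw [hεdef]; ring
  -- exponent arithmetic
  have hBinv : B ^ (-1:ℝ) = B⁻¹ := Real.rpow_neg_one B
  have hKT : K * T ≤ σ / 2 * Real.log B := by
    have hlog : 0 ≤ Real.log B := Real.log_nonneg hB1
    calc K * T ≤ K * (σ / (12 * (C₀+1)^2) * B ^ 2 * Real.log B) :=
          mul_le_mul_of_nonneg_left hTle hKpos.le
      _ = σ / 2 * Real.log B := by
          rw [hKdef, hM1def, hBinv]
          field_simp
          ring
  have hexpKT : Real.exp (K * T) ≤ B ^ (σ/2 : ℝ) := by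
    calc Real.exp (K * T) ≤ Real.exp (σ / 2 * Real.log B) := Real.exp_le_exp.2 hKT
      _ = B ^ (σ/2 : ℝ) := by rw [Real.rpow_def_of_pos hB0, mul_comm]
  have hmulexp : B ^ (-1 - σ) * B ^ (σ/2 : ℝ) = B ^ (-1 - σ/2) := by
    rw [← Real.rpow_add hB0]
    congr 1 <;> ring
  have hexple : B ^ (-1 - σ) ≤ B ^ (-1 - σ/2) :=
    Real.rpow_le_rpow_of_exponent_le hB1 (by linarith)
  -- the key Gronwall estimate
  have key : ∀ xb ∈ Icc (0:ℝ) T, (∀ u ∈ Icc (0:ℝ) xb, ‖a u - g u‖ ≤ Q) →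
      ∀ u ∈ Icc (0:ℝ) xb, ‖a u - g u‖ ≤ 2 * C₀ * B ^ (-1 - σ/2) := by
    intro xb hxb hboot u hu
    have hIccsub : Icc (0:ℝ) xb ⊆ Icc 0 T := Icc_subset_Icc le_rfl hxb.2
    have hIcosub : Ico (0:ℝ) xb ⊆ Ico 0 T := Ico_subset_Ico le_rfl hxb.2
    have hgron := norm_le_gronwallBound_of_norm_deriv_right_le
      (f := h) (f' := h') (δ := 0) (K := K) (ε := ε) (a := 0) (b := xb)
      (hhc.mono hIccsub) (fun x hx => hhderiv x (hIcosub hx)) (le_of_eq hh0)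
      (fun x hx => by
        refine hKbd x (hIccsub (Ico_subset_Icc_self hx)) ?_
        have hbt := hboot x (Ico_subset_Icc_self hx)
        have hgx := hgbd x (hIccsub (Ico_subset_Icc_self hx))
        calc ‖a x‖ = ‖g x + (a x - g x)‖ := by rw [add_sub_cancel]
          _ ≤ ‖g x‖ + ‖a x - g x‖ := norm_add_le _ _
          _ ≤ C₀ * B ^ (-1:ℝ) + Q := add_le_add hgx hbt
          _ ≤ M1 := by rw [hM1def, hQdef]; nlinarith)
    have h4 := hgron u hu
    have h5 : gronwallBound 0 K ε (u - 0) ≤ C₀ * B ^ (-1 - σ) * Real.exp (K * T) := by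
      have hgb : gronwallBound 0 K ε (u - 0) =
          0 * Real.exp (K * (u - 0)) + ε / K * (Real.exp (K * (u - 0)) - 1) := by
        rw [gronwallBound_of_K_ne_0 hKpos.ne']
      have hεK : ε / K = C₀ * B ^ (-1 - σ) := by
        rw [hεdef]
        field_simp
      rw [hgb, hεK, zero_mul, zero_add]
      have hKu : K * (u - 0) ≤ K * T :=
        mul_le_mul_of_nonneg_left (by linarith [hu.2, hxb.2]) hKpos.le
      have he : Real.exp (K * (u - 0)) - 1 ≤ Real.exp (K * T) := by
        have := Real.exp_le_exp.2 hKu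
        linarith
      exact mul_le_mul_of_nonneg_left he (by positivity)
    have h6 : ‖h u‖ ≤ C₀ * B ^ (-1 - σ/2) := by
      have h7 : C₀ * B ^ (-1 - σ) * Real.exp (K * T) ≤ C₀ * B ^ (-1 - σ/2) := by
        calc C₀ * B ^ (-1 - σ) * Real.exp (K * T)
            ≤ C₀ * B ^ (-1 - σ) * B ^ (σ/2:ℝ) :=
              mul_le_mul_of_nonneg_left hexpKT (by positivity)
          _ = C₀ * B ^ (-1 - σ/2) := by rw [mul_assoc, hmulexp]
      linarith
    have h8 : ‖EI u‖ ≤ C₀ * B ^ (-1 - σ) := hEIbd u (hIccsub hu)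
    have h9 := hsub1 u
    have h10 : C₀ * B ^ (-1 - σ) ≤ C₀ * B ^ (-1 - σ/2) :=
      mul_le_mul_of_nonneg_left hexple hC0.le
    calc ‖a u - g u‖ ≤ ‖h u‖ + ‖EI u‖ := h9
      _ ≤ C₀ * B ^ (-1 - σ/2) + C₀ * B ^ (-1 - σ) := add_le_add h6 h8
      _ ≤ 2 * C₀ * B ^ (-1 - σ/2) := by linarith
  -- numeric comparison of the improved bound with Q
  have hQ' : 2 * C₀ * B ^ (-1 - σ/2) ≤ (1/4) * B ^ (-1:ℝ) := by
    have hsplit : B ^ (-1 - σ/2 : ℝ) = B ^ (-1:ℝ) * B ^ (-(σ/2) : ℝ) := by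
      rw [← Real.rpow_add hB0]
      congr 1 <;> ring
    have hspos : (0:ℝ) < B ^ (σ/2 : ℝ) := Real.rpow_pos_of_pos hB0 _
    have hinv : B ^ (-(σ/2) : ℝ) ≤ (8*C₀)⁻¹ := by
      rw [Real.rpow_neg hB0.le]
      exact inv_anti₀ (by positivity) hBσ
    calc 2 * C₀ * B ^ (-1 - σ/2) = (2 * C₀ * B ^ (-1:ℝ)) * B ^ (-(σ/2):ℝ) := by
          rw [hsplit]; ring
      _ ≤ (2 * C₀ * B ^ (-1:ℝ)) * (8*C₀)⁻¹ :=
          mul_le_mul_of_nonneg_left hinv (by positivity)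
      _ = (1/4) * B ^ (-1:ℝ) := by field_simp; ring
  -- the bootstrap set
  set s : Set ℝ := {t | ∀ u ∈ Icc (0:ℝ) t, ‖a u - g u‖ ≤ Q} with hsdef
  have hclosed : IsClosed (s ∩ Icc 0 T) := by
    apply IsSeqClosed.isClosed
    intro xk x hmem hlim
    have hxIcc : x ∈ Icc (0:ℝ) T :=
      isClosed_Icc.mem_of_tendsto hlim (Filter.Eventually.of_forall fun k => (hmem k).2)
    refine ⟨?_, hxIcc⟩
    intro u hu
    rcases lt_or_eq_of_le hu.2 with hlt | heq
    · obtain ⟨k, hk⟩ := (hlim.eventually (eventually_gt_nhds hlt)).exists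
      exact (hmem k).1 u ⟨hu.1, hk.le⟩
    · subst heq
      have h1 : Filter.Tendsto xk Filter.atTop (nhdsWithin u (Icc 0 T)) :=
        tendsto_nhdsWithin_of_tendsto_nhds_of_eventually_within xk hlim
          (Filter.Eventually.of_forall fun k => (hmem k).2)
      have hfc : Filter.Tendsto (fun k => ‖a (xk k) - g (xk k)‖) Filter.atTop
          (nhds ‖a u - g u‖) := (((hac.sub hgc) u hxIcc).tendsto.comp h1).norm
      exact le_of_tendsto hfc
        (Filter.Eventually.of_forall fun k => (hmem k).1 (xk k) ⟨(hmem k).2.1, le_rfl⟩)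
  have hbootT : Icc (0:ℝ) T ⊆ s := by
    apply hclosed.Icc_subset_of_forall_exists_gt
    · intro u hu
      have hu0 : u = 0 := le_antisymm hu.2 hu.1
      subst hu0
      rw [ha0, sub_self, norm_zero, hQdef]
      positivity
    · rintro x ⟨hxs, hxI⟩ y hy
      have hxIcc : x ∈ Icc (0:ℝ) T := ⟨hxI.1, hxI.2.le⟩
      have hkey := key x hxIcc hxs
      have hfx : ‖a x - g x‖ < Q := by
        refine lt_of_le_of_lt ((hkey x ⟨hxI.1, le_rfl⟩).trans hQ') ?_
        rw [hQdef]
        nlinarith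
      have hcw : Filter.Tendsto (fun z => ‖a z - g z‖) (nhdsWithin x (Icc 0 T))
          (nhds ‖a x - g x‖) := ((hac.sub hgc) x hxIcc).tendsto.norm
      have hev : ∀ᶠ z in nhdsWithin x (Icc 0 T), ‖a z - g z‖ < Q :=
        hcw.eventually_lt_const hfx
      obtain ⟨δ, hδ, hball⟩ := Metric.mem_nhdsWithin_iff.1 hev
      set t'' := min (x + δ/2) (min y T) with ht''
      have htx : x < t'' := lt_min (by linarith) (lt_min hy hxI.2)
      have hty : t'' ≤ y := (min_le_right _ _).trans (min_le_left _ _)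
      have htT : t'' ≤ T := (min_le_right _ _).trans (min_le_right _ _)
      refine ⟨t'', ?_, htx, hty⟩
      intro u hu
      rcases le_or_gt u x with hux | hux
      · exact hxs u ⟨hu.1, hux⟩
      · have huT : u ∈ Icc (0:ℝ) T := ⟨hu.1, hu.2.trans htT⟩
        have hud : u ∈ Metric.ball x δ := by
          rw [Metric.mem_ball, Real.dist_eq, abs_of_pos (by linarith)]
          have : t'' ≤ x + δ/2 := min_le_left _ _
          linarith [hu.2]
        exact (hball ⟨hud, huT⟩).le
  -- conclusion
  intro t ht
  exact key T ⟨hT0.le, le_rfl⟩ (fun u hu => (hbootT hu) u ⟨hu.1, le_rfl⟩) t ht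
end
end

section
/- Let N ≥ 1 and let b : ℝ → ℂ^N solve the Toy Model System on ℂ^N. Then the Hamiltonian H(b(t)) = Σ_{j=1}^{N} ( (1/4)|b_j(t)|⁴ − Re( conj(b_j(t))² b_{j−1}(t)² ) ) is constant in t (with the convention b₀(t) = 0). -/
open scoped BigOperators

noncomputable section

/-- The right-hand side of the Toy Model System (with `b 0 = 0` by convention). -/
def toyRHS (b : ℕ → ℂ) (j : ℕ) : ℂ :=
  -Complex.I * ((‖b j‖ : ℝ) : ℂ) ^ 2 * b j +
    2 * Complex.I * (starRingEnd ℂ) (b j) * (b (j - 1) ^ 2 + b (j + 1) ^ 2)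

/-- `b` solves the Toy Model System on `ℂ^N` (encoded as `b : ℝ → ℕ → ℂ` vanishing
outside indices `1,…,N`, so that `b₀ = b_{N+1} = 0` automatically). -/
def IsToySol (N : ℕ) (b : ℝ → ℕ → ℂ) : Prop :=
  (∀ t, b t 0 = 0) ∧ (∀ t, ∀ j, N < j → b t j = 0) ∧
    ∀ j, 1 ≤ j → j ≤ N → ∀ t, HasDerivAt (fun s => b s j) (toyRHS (b t) j) t

/-- Telescoping quantity for the Hamiltonian derivative. -/
def Taux (z : ℕ → ℂ) (k : ℕ) : ℂ :=
  -2 * Complex.I * z k * (starRingEnd ℂ) (z k) *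
    ((starRingEnd ℂ) (z (k+1)) ^ 2 * z k ^ 2 - z (k+1) ^ 2 * (starRingEnd ℂ) (z k) ^ 2
      - 2 * (starRingEnd ℂ) (z (k+1)) ^ 2 * z (k-1) ^ 2
      + 2 * z (k+1) ^ 2 * (starRingEnd ℂ) (z (k-1)) ^ 2)

lemma abs_sq_eq (w : ℂ) : ((‖w‖ : ℝ) : ℂ) ^ 2 = w * (starRingEnd ℂ) w := by
  rw [← Complex.ofReal_pow, Complex.sq_norm, Complex.mul_conj]

lemma re_quarter (w : ℂ) : ((1/4 : ℂ) * ((starRingEnd ℂ) w) ^ 2 * w ^ 2).re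
    = (1/4 : ℝ) * ‖w‖ ^ 4 := by
  have h : (1/4 : ℂ) * ((starRingEnd ℂ) w) ^ 2 * w ^ 2 = (1/4 : ℂ) * (w * (starRingEnd ℂ) w) ^ 2 := by
    ring
  rw [h, Complex.mul_conj, ← Complex.ofReal_pow,
    show ((1/4 : ℂ)) = ((1/4 : ℝ) : ℂ) by norm_num, ← Complex.ofReal_mul, Complex.ofReal_re,
    Complex.normSq_eq_norm_sq]
  ring

/-- The Hamiltonian `H(b) = Σ_j (1/4)|b_j|⁴ − Re(conj(b_j)² b_{j−1}²)` is conserved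
by the Toy Model System. -/
theorem stmt7 (N : ℕ) (hN : 1 ≤ N) (b : ℝ → ℕ → ℂ) (hb : IsToySol N b) :
    ∀ t s : ℝ,
      (∑ j ∈ Finset.Icc 1 N, ((1/4 : ℝ) * ‖b t j‖ ^ 4 -
        (((starRingEnd ℂ) (b t j)) ^ 2 * (b t (j - 1)) ^ 2).re)) =
      (∑ j ∈ Finset.Icc 1 N, ((1/4 : ℝ) * ‖b s j‖ ^ 4 -
        (((starRingEnd ℂ) (b s j)) ^ 2 * (b s (j - 1)) ^ 2).re)) := by
  obtain ⟨h0, hNz, hderiv⟩ := hb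
  have key : ∀ t : ℝ, HasDerivAt (fun s => ∑ j ∈ Finset.Icc 1 N,
      ((1/4 : ℝ) * ‖b s j‖ ^ 4 -
        (((starRingEnd ℂ) (b s j)) ^ 2 * (b s (j - 1)) ^ 2).re)) 0 t := by
    intro t
    set z : ℕ → ℂ := fun j => b t j with hz
    set d : ℕ → ℂ := fun j => toyRHS (b t) j with hd
    -- derivative of each coordinate (including index 0)
    have hcoord : ∀ j, j ≤ N → HasDerivAt (fun s => b s j) (d j) t := by
      intro j hj
      rcases Nat.eq_zero_or_pos j with h | h
      · subst h
        have hfun : (fun s => b s 0) = fun _ => (0 : ℂ) := funext h0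
        have hval : d 0 = 0 := by
          simp [hd, toyRHS, h0 t]
        rw [hfun, hval]
        exact hasDerivAt_const t 0
      · exact hderiv j h hj t
    -- complex derivative of each Hamiltonian summand
    set Dc : ℕ → ℂ := fun j =>
      ((1/4 : ℂ) * ((starRingEnd ℂ) (d j) * (starRingEnd ℂ) (z j)
          + (starRingEnd ℂ) (z j) * (starRingEnd ℂ) (d j))) * (z j * z j)
        + ((1/4 : ℂ) * ((starRingEnd ℂ) (z j) * (starRingEnd ℂ) (z j)))
            * (d j * z j + z j * d j)
      - (((starRingEnd ℂ) (d j) * (starRingEnd ℂ) (z j)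
          + (starRingEnd ℂ) (z j) * (starRingEnd ℂ) (d j)) * (z (j-1) * z (j-1))
        + ((starRingEnd ℂ) (z j) * (starRingEnd ℂ) (z j))
            * (d (j-1) * z (j-1) + z (j-1) * d (j-1))) with hDc
    have hterm : ∀ j ∈ Finset.Icc 1 N,
        HasDerivAt (fun s => (1/4 : ℝ) * ‖b s j‖ ^ 4 -
          (((starRingEnd ℂ) (b s j)) ^ 2 * (b s (j - 1)) ^ 2).re) ((Dc j).re) t := by
      intro j hj
      simp only [Finset.mem_Icc] at hj
      have hbj : HasDerivAt (fun s => b s j) (d j) t := hcoord j hj.2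
      have hbj' : HasDerivAt (fun s => b s (j-1)) (d (j-1)) t :=
        hcoord (j-1) (le_trans (Nat.sub_le _ _) hj.2)
      have hcj : HasDerivAt (fun s => (starRingEnd ℂ) (b s j)) ((starRingEnd ℂ) (d j)) t := by
        simpa only [starRingEnd_apply] using hbj.star
      have h1 := ((((hcj.mul hcj).const_mul (1/4 : ℂ)).mul (hbj.mul hbj)).sub
          ((hcj.mul hcj).mul (hbj'.mul hbj')))
      have hψ : HasDerivAt (fun s => (1/4 : ℂ) * ((starRingEnd ℂ) (b s j)) ^ 2 * (b s j) ^ 2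
          - ((starRingEnd ℂ) (b s j)) ^ 2 * (b s (j-1)) ^ 2) (Dc j) t := by
        convert h1 using 1
        · rfl
        · funext s; simp only [Pi.mul_apply, Pi.sub_apply]; ring
        · rfl
      have hre := (Complex.reCLM.hasFDerivAt.comp_hasDerivAt t hψ)
      have hfeq : (fun s => (1/4 : ℝ) * ‖b s j‖ ^ 4 -
          (((starRingEnd ℂ) (b s j)) ^ 2 * (b s (j - 1)) ^ 2).re)
          = (fun s => Complex.reCLM ((1/4 : ℂ) * ((starRingEnd ℂ) (b s j)) ^ 2 * (b s j) ^ 2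
          - ((starRingEnd ℂ) (b s j)) ^ 2 * (b s (j-1)) ^ 2)) := by
        funext s
        simp only [Complex.reCLM_apply, Complex.sub_re, re_quarter]
      rw [hfeq]
      exact hre
    have hsum := HasDerivAt.fun_sum hterm
    have hderiv0 : (∑ j ∈ Finset.Icc 1 N, (Dc j).re) = 0 := by
      rw [← Complex.re_sum]
      set S : ℂ := ∑ j ∈ Finset.Icc 1 N, Dc j with hS
      have hTN : Taux z N = 0 := by
        have hzN : z (N+1) = 0 := hNz t (N+1) (Nat.lt_succ_self N)
        simp [Taux, hzN]
      have hT0 : Taux z 0 = 0 := by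
        have hz0 : z 0 = 0 := h0 t
        simp [Taux, hz0]
      have hconj : S + (starRingEnd ℂ) S = 0 := by
        rw [hS, map_sum, ← Finset.sum_add_distrib]
        have hterm2 : ∀ j ∈ Finset.Icc 1 N,
            Dc j + (starRingEnd ℂ) (Dc j) = Taux z j - Taux z (j-1) := by
          intro j hj
          simp only [Finset.mem_Icc] at hj
          have hj1 : j - 1 + 1 = j := Nat.succ_pred_eq_of_pos hj.1
          simp only [hDc, hd, hz, toyRHS, Taux, hj1, abs_sq_eq, map_add, map_mul, map_sub,
            map_neg, map_pow, map_ofNat, Complex.conj_conj, Complex.conj_I, map_one, map_div₀]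
          ring
        rw [Finset.sum_congr rfl hterm2, ← Finset.Ico_add_one_right_eq_Icc, Finset.sum_Ico_eq_sum_range]
        have hre2 : ∀ i, Taux z (1 + i) - Taux z (1 + i - 1) = Taux z (i + 1) - Taux z i := by
          intro i
          congr 2 <;> omega
        simp only [hre2]
        rw [Finset.sum_range_sub (fun i => Taux z i)]
        simp only [Nat.succ_sub_one, Nat.add_sub_cancel, hTN, hT0, sub_zero]
      have h2 := Complex.add_conj S
      rw [hconj] at h2
      have h3 : (2 : ℝ) * S.re = 0 := by exact_mod_cast h2.symm
      linarith
    rw [hderiv0] at hsum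
    exact hsum
  intro t s
  exact is_const_of_deriv_eq_zero (fun x => (key x).differentiableAt)
    (fun x => (key x).deriv) t s
end
end
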